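/- Let d = 3 and let x ∈ ℝ³ satisfy ε < |x| < 2. Set r' = |F_ε(x)|. Then the push-forward density satisfies 1/det(DF_ε(x)) = (2-ε)·(2-ε-(2-2ε)/r')². -/

import Mathlib

open Real
section lemmas
variable {F : Type*} [NormedAddCommGroup F] [InnerProductSpace ℝ F]

lemma myHasFDerivAt_norm (x : F) (hx : x ≠ 0) :
    HasFDerivAt (fun y : F => ‖y‖) (‖x‖⁻¹ • innerSL ℝ x) x := by
  have h1 : HasFDerivAt (fun y : F => ‖y‖ ^ 2) (2 • innerSL ℝ x) x :=
    (hasStrictFDerivAt_norm_sq x).hasFDerivAt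
  have hxn : ‖x‖ ≠ 0 := norm_ne_zero_iff.2 hx
  have hx2 : (‖x‖ ^ 2 : ℝ) ≠ 0 := pow_ne_zero _ hxn
  have h2 : HasDerivAt (√·) (1 / (2 * √(‖x‖ ^ 2))) (‖x‖ ^ 2) := hasDerivAt_sqrt hx2
  have h3 := h2.comp_hasFDerivAt x h1
  have hfun : ((fun x => √x) ∘ fun y : F => ‖y‖ ^ 2) = fun y : F => ‖y‖ := by
    funext y; simp [Function.comp, Real.sqrt_sq (norm_nonneg y)]
  rw [hfun] at h3
  refine h3.congr_fderiv (Eq.symm ?_)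
  rw [Real.sqrt_sq (norm_nonneg x)]
  ext y
  simp only [ContinuousLinearMap.smul_apply, smul_eq_mul, two_smul,
    ContinuousLinearMap.add_apply]
  field_simp
  ring

lemma myHasFDerivAt_inv_norm_smul (x : F) (hx : x ≠ 0) :
    HasFDerivAt (fun y : F => ‖y‖⁻¹ • y)
      (‖x‖⁻¹ • ContinuousLinearMap.id ℝ F
        + ((-(‖x‖ ^ 2)⁻¹ * ‖x‖⁻¹) • innerSL ℝ x).smulRight x) x := by
  have hinv : HasFDerivAt (fun y : F => ‖y‖⁻¹)
      (-(‖x‖ ^ 2)⁻¹ • (‖x‖⁻¹ • innerSL ℝ x)) x :=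
    (hasDerivAt_inv (norm_ne_zero_iff.2 hx)).comp_hasFDerivAt x (myHasFDerivAt_norm x hx)
  have h := hinv.smul (hasFDerivAt_id x)
  convert h using 1
  ext y
  simp [smul_smul, mul_comm]
  simp [smul_smul]
end lemmas


/-- The Kohn regularised cloaking map `F_ε : ℝ³ → ℝ³`. -/
noncomputable def kohnMap3 (ε : ℝ) (x : EuclideanSpace ℝ (Fin 3)) :
    EuclideanSpace ℝ (Fin 3) :=
  if 2 ≤ ‖x‖ then x
  else if ε ≤ ‖x‖ then ((2 - 2 * ε) / (2 - ε) + ‖x‖ / (2 - ε)) • (‖x‖⁻¹ • x)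
  else ε⁻¹ • x

set_option maxHeartbeats 1000000 in
/-- In dimension 3, with `r' = |F_ε(x)|`, the push-forward density satisfies
`1/det(DF_ε(x)) = (2-ε)·(2-ε-(2-2ε)/r')²`. -/
theorem kohnMap3_pushforward_density (ε : ℝ) (hε0 : 0 < ε) (hε1 : ε < 1)
    (x : EuclideanSpace ℝ (Fin 3)) (hx1 : ε < ‖x‖) (hx2 : ‖x‖ < 2)
    (r' : ℝ) (hr' : r' = ‖kohnMap3 ε x‖) :
    (LinearMap.det (fderiv ℝ (kohnMap3 ε) x :
        EuclideanSpace ℝ (Fin 3) →ₗ[ℝ] EuclideanSpace ℝ (Fin 3)))⁻¹ =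
      (2 - ε) * (2 - ε - (2 - 2 * ε) / r') ^ 2 := by
  have hn : 0 < ‖x‖ := hε0.trans hx1
  have hx0 : x ≠ 0 := norm_pos_iff.1 hn
  have hnne : ‖x‖ ≠ 0 := hn.ne'
  have h2ε : (0:ℝ) < 2 - ε := by linarith
  set c₁ : ℝ := (2 - 2 * ε) / (2 - ε) with hc₁
  -- the local model G and its derivative
  set L : EuclideanSpace ℝ (Fin 3) →L[ℝ] EuclideanSpace ℝ (Fin 3) :=
    c₁ • (‖x‖⁻¹ • ContinuousLinearMap.id ℝ (EuclideanSpace ℝ (Fin 3))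
        + ((-(‖x‖ ^ 2)⁻¹ * ‖x‖⁻¹) • innerSL ℝ x).smulRight x)
      + (2 - ε)⁻¹ • ContinuousLinearMap.id ℝ (EuclideanSpace ℝ (Fin 3)) with hL
  have hG : HasFDerivAt (fun y : EuclideanSpace ℝ (Fin 3) => c₁ • (‖y‖⁻¹ • y) + (2 - ε)⁻¹ • y) L x :=
    ((myHasFDerivAt_inv_norm_smul x hx0).const_smul c₁).add
      ((hasFDerivAt_id x).const_smul (2 - ε)⁻¹)
  -- kohnMap3 agrees with G near x
  have hopen : IsOpen {y : EuclideanSpace ℝ (Fin 3) | ε < ‖y‖ ∧ ‖y‖ < 2} := by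
    have : {y : EuclideanSpace ℝ (Fin 3) | ε < ‖y‖ ∧ ‖y‖ < 2}
        = (fun y : EuclideanSpace ℝ (Fin 3) => ‖y‖) ⁻¹' (Set.Ioo ε 2) := rfl
    rw [this]
    exact isOpen_Ioo.preimage continuous_norm
  have heq : kohnMap3 ε =ᶠ[nhds x] (fun y : EuclideanSpace ℝ (Fin 3) => c₁ • (‖y‖⁻¹ • y) + (2 - ε)⁻¹ • y) := by
    filter_upwards [hopen.mem_nhds ⟨hx1, hx2⟩] with y hy
    obtain ⟨hy1, hy2⟩ := hy
    have hyn : ‖y‖ ≠ 0 := (hε0.trans hy1).ne'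
    rw [kohnMap3, if_neg (not_le.2 hy2), if_pos (le_of_lt hy1), add_smul, smul_smul]
    congr 1
    rw [smul_smul]
    congr 1
    field_simp
  have hF : HasFDerivAt (kohnMap3 ε) L x := hG.congr_of_eventuallyEq heq
  rw [hF.fderiv]
  -- determinant computation
  set s : ℝ := (2 - ε)⁻¹ + c₁ * ‖x‖⁻¹ with hs
  set t : ℝ := c₁ * (-(‖x‖ ^ 2)⁻¹ * ‖x‖⁻¹) with ht
  have hnorm : x 0 ^ 2 + x 1 ^ 2 + x 2 ^ 2 = ‖x‖ ^ 2 := by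
    rw [EuclideanSpace.norm_eq, Real.sq_sqrt (by positivity)]
    simp [Fin.sum_univ_three]
  have hdet : LinearMap.det (L : EuclideanSpace ℝ (Fin 3) →ₗ[ℝ] EuclideanSpace ℝ (Fin 3)) = s ^ 2 * (2 - ε)⁻¹ := by
    set b := (EuclideanSpace.basisFun (Fin 3) ℝ).toBasis with hb
    rw [← LinearMap.det_toMatrix b]
    have hM : LinearMap.toMatrix b b (L : EuclideanSpace ℝ (Fin 3) →ₗ[ℝ] EuclideanSpace ℝ (Fin 3))
        = Matrix.of (fun i j => s * (if i = j then 1 else 0) + t * x j * x i) := by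
      ext i j
      rw [LinearMap.toMatrix_apply]
      simp [hb, OrthonormalBasis.coe_toBasis_repr_apply, OrthonormalBasis.coe_toBasis,
        EuclideanSpace.basisFun_apply, hL, hs, ht,
        ContinuousLinearMap.smul_apply, ContinuousLinearMap.smulRight_apply,
        inner_add_right, inner_smul_right, real_inner_smul_left,
        EuclideanSpace.inner_single_left, EuclideanSpace.inner_single_right,
        EuclideanSpace.single_apply]
      by_cases hij : i = j
      · subst hij; simp; ring
      · simp [hij, Ne.symm hij]; ring
    rw [hM, Matrix.det_fin_three]
    simp only [Matrix.of_apply]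
    norm_num [show (1:Fin 3) ≠ 2 from by decide, show (2:Fin 3) ≠ 1 from by decide,
      show (0:Fin 3) ≠ 2 from by decide, show (2:Fin 3) ≠ 0 from by decide,
      show (0:Fin 3) ≠ 1 from by decide, show (1:Fin 3) ≠ 0 from by decide]
    have hst : s + t * (x 0 ^ 2 + x 1 ^ 2 + x 2 ^ 2) = (2 - ε)⁻¹ := by
      rw [hnorm, hs, ht]
      field_simp
      ring
    rw [← hst]
    ring
  rw [hdet]
  -- value of r'
  have hr'v : r' = (2 - 2 * ε + ‖x‖) / (2 - ε) := by
    rw [hr', kohnMap3, if_neg (not_le.2 hx2), if_pos (le_of_lt hx1)]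
    rw [norm_smul, norm_smul, norm_inv, norm_norm, Real.norm_eq_abs]
    have ha : 0 < (2 - 2 * ε) / (2 - ε) + ‖x‖ / (2 - ε) :=
      add_pos (div_pos (by linarith) h2ε) (div_pos hn h2ε)
    rw [abs_of_pos ha]
    field_simp
  have hr'pos : 0 < r' := by
    rw [hr'v]; exact div_pos (by linarith) h2ε
  have hsv : s = r' / ‖x‖ := by
    rw [hs, hc₁, hr'v]
    field_simp
    ring
  have key : 2 - ε - (2 - 2 * ε) / r' = ‖x‖ / r' := by
    have h3 : 2 - 2 * ε + ‖x‖ ≠ 0 := by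
      have : (0:ℝ) < 2 - 2 * ε + ‖x‖ := by linarith
      exact this.ne'
    rw [hr'v]
    rw [div_div_eq_mul_div, div_div_eq_mul_div, eq_div_iff h3, sub_mul, div_mul_cancel₀ _ h3]
    ring
  rw [hsv, key]
  field_simp
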